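/- Let V be the vertex set of a median graph, and fix x₀, x ∈ V and an integer n ≥ 1 with d_nor(x₀,x) ≥ n; let H_n and F_h be as defined. Then [x₀,x] ∩ S_nor(x₀,n) = ⋃_{h ∈ H_n} F_h. Moreover, for each h ∈ H_n, every halfspace k that separates two points of F_h (i.e. F_h ∩ k ≠ ∅ and F_h ∖ k ≠ ∅) crosses h. -/

import Mathlib

open scoped ENNReal

namespace MedianGraph

variable {V : Type*}

/-- The metric interval `[x,y]` in a graph with respect to the edge-path metric. -/
def itv (G : SimpleGraph V) (x y : V) : Set V :=
  {z | G.dist x z + G.dist z y = G.dist x y}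

/-- A subset of the vertex set is convex if it contains every interval between
two of its points. -/
def Cvx (G : SimpleGraph V) (S : Set V) : Prop :=
  ∀ a ∈ S, ∀ b ∈ S, itv G a b ⊆ S

/-- A median graph: a connected graph in which every triple of vertices has a
unique median. -/
def IsMedianGraph (G : SimpleGraph V) : Prop :=
  G.Connected ∧ ∀ x y z : V, ∃! m : V,
    m ∈ itv G x y ∧ m ∈ itv G y z ∧ m ∈ itv G z x

/-- A halfspace: a subset which is nonempty, proper, convex with convex complement. -/
def IsHalfspace (G : SimpleGraph V) (h : Set V) : Prop :=
  h.Nonempty ∧ hᶜ.Nonempty ∧ Cvx G h ∧ Cvx G hᶜ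

/-- `Hset G x y` is the set of halfspaces containing `x` but not `y`. -/
def Hset (G : SimpleGraph V) (x y : V) : Set (Set V) :=
  {h | IsHalfspace G h ∧ x ∈ h ∧ y ∉ h}

/-- The normal distance `d_nor(x,y)`: the maximum cardinality of a chain (under
inclusion) in `Hset G x y`. -/
noncomputable def dnor (G : SimpleGraph V) (x y : V) : ℕ :=
  sSup {n : ℕ | ∃ c : Set (Set V), c ⊆ Hset G x y ∧ IsChain (· ⊆ ·) c ∧ c.encard = n}

/-- Two halfspaces cross if all four intersections of them and their
complements are nonempty. -/
def Crosses (h k : Set V) : Prop :=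
  (h ∩ k).Nonempty ∧ (h ∩ kᶜ).Nonempty ∧ (hᶜ ∩ k).Nonempty ∧ (hᶜ ∩ kᶜ).Nonempty

/-- `Hn G x₀ x n`: the halfspaces `h` in `Hset G x₀ x` such that the maximum
cardinality of a chain in `{k ∈ H(x₀,x) : k ⊆ h}` equals `n`. -/
noncomputable def Hn (G : SimpleGraph V) (x₀ x : V) (n : ℕ) : Set (Set V) :=
  {h | h ∈ Hset G x₀ x ∧
    sSup {m : ℕ | ∃ c : Set (Set V), c ⊆ {k | k ∈ Hset G x₀ x ∧ k ⊆ h} ∧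
      IsChain (· ⊆ ·) c ∧ c.encard = m} = n}

/-- `Fh G x₀ x n h = {w ∈ [x₀,x] ∩ S_nor(x₀,n) : w ∉ h}`. -/
def Fh (G : SimpleGraph V) (x₀ x : V) (n : ℕ) (h : Set V) : Set V :=
  {w | w ∈ itv G x₀ x ∧ dnor G x₀ w = n ∧ w ∉ h}

/-- The graph has dimension at most `η` if every family of pairwise crossing
halfspaces has cardinality at most `η`. -/
def DimLE (G : SimpleGraph V) (η : ℕ) : Prop :=
  ∀ F : Set (Set V), (∀ h ∈ F, IsHalfspace G h) →
    (∀ h ∈ F, ∀ k ∈ F, h ≠ k → Crosses h k) → F.encard ≤ η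

end MedianGraph

open MedianGraph

section Aux

variable {V : Type*}

/-- The set of cardinalities of chains contained in a family `A` of sets. -/
def chainLens (A : Set (Set V)) : Set ℕ :=
  {m : ℕ | ∃ c : Set (Set V), c ⊆ A ∧ IsChain (· ⊆ ·) c ∧ c.encard = m}

lemma zero_mem_chainLens (A : Set (Set V)) : 0 ∈ chainLens A :=
  ⟨∅, Set.empty_subset _, by simp [IsChain, Set.Pairwise], by simp⟩

lemma chainLens_bddAbove {A : Set (Set V)} {n : ℕ} (h : sSup (chainLens A) = n)
    (hn : 1 ≤ n) : BddAbove (chainLens A) := by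
  by_contra hb
  rw [csSup_of_not_bddAbove hb] at h
  simp at h
  omega

lemma le_of_mem_chainLens {A : Set (Set V)} {n m : ℕ} (h : sSup (chainLens A) = n)
    (hn : 1 ≤ n) (hm : m ∈ chainLens A) : m ≤ n :=
  h ▸ le_csSup (chainLens_bddAbove h hn) hm

lemma exists_chain_of_sSup {A : Set (Set V)} {n : ℕ} (h : sSup (chainLens A) = n)
    (hn : 1 ≤ n) : n ∈ chainLens A := by
  have := Nat.sSup_mem ⟨0, zero_mem_chainLens A⟩ (chainLens_bddAbove h hn)
  rwa [h] at this

lemma sSup_chainLens_eq {A : Set (Set V)} {n : ℕ} (hmem : n ∈ chainLens A)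
    (hub : ∀ m ∈ chainLens A, m ≤ n) : sSup (chainLens A) = n :=
  le_antisymm (csSup_le ⟨n, hmem⟩ hub) (le_csSup ⟨n, hub⟩ hmem)

lemma chain_exists_max {c : Set (Set V)} (hfin : c.Finite) (hne : c.Nonempty)
    (hch : IsChain (· ⊆ ·) c) : ∃ h ∈ c, ∀ k ∈ c, k ⊆ h := by
  obtain ⟨h, hh, hmax⟩ := hfin.exists_maximal hne
  refine ⟨h, hh, fun k hk => ?_⟩
  rcases eq_or_ne k h with rfl | hne'
  · exact subset_rfl
  · rcases hch hk hh hne' with h1 | h1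
    · exact h1
    · exact hmax hk h1

lemma sep_lemma {G : SimpleGraph V} {h : Set V} {x₀ w x : V} (hc : Cvx G h)
    (hx0 : x₀ ∈ h) (hw : w ∉ h) (hitv : w ∈ itv G x₀ x) : x ∉ h :=
  fun hx => hw (hc x₀ hx0 x hx hitv)

lemma Hset_mono {G : SimpleGraph V} {k : Set V} {x₀ w x : V}
    (hk : k ∈ Hset G x₀ w) (hitv : w ∈ itv G x₀ x) : k ∈ Hset G x₀ x :=
  ⟨hk.1, hk.2.1, sep_lemma hk.1.2.2.1 hk.2.1 hk.2.2 hitv⟩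

/-- Key contradiction lemma: if `h ∈ Hn` and `w ∈ F_h`, there is no halfspace `K`
strictly above `h` avoiding `w`. -/
lemma no_strict_above {G : SimpleGraph V} {x₀ x w : V} {h K : Set V} {n : ℕ}
    (hn : 1 ≤ n) (hHn : h ∈ Hn G x₀ x n) (hwF : w ∈ Fh G x₀ x n h)
    (hK : IsHalfspace G K) (hsub : h ⊆ K) (hne : h ≠ K) (hwK : w ∉ K) : False := by
  obtain ⟨hhH, hsup⟩ := hHn
  obtain ⟨hwitv, hwd, hwh⟩ := hwF
  have hsup' : sSup (chainLens {k | k ∈ Hset G x₀ x ∧ k ⊆ h}) = n := hsup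
  obtain ⟨c, hcA, hcch, hccard⟩ := exists_chain_of_sSup hsup' hn
  -- every element of `c` is in `Hset G x₀ w`
  have hcw : c ⊆ Hset G x₀ w := fun k' hk' =>
    ⟨(hcA hk').1.1, (hcA hk').1.2.1, fun hw' => hwh ((hcA hk').2 hw')⟩
  have hKc : K ∉ c := fun hKc => hne (le_antisymm hsub ((hcA hKc).2))
  have hchain' : IsChain (· ⊆ ·) (insert K c) :=
    hcch.insert (fun b hb _ => Or.inr (((hcA hb).2).trans hsub))
  have hx₀K : x₀ ∈ K := hsub hhH.2.1
  have hmem : (n + 1 : ℕ) ∈ chainLens (Hset G x₀ w) := by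
    refine ⟨insert K c, Set.insert_subset ⟨hK, hx₀K, hwK⟩ hcw, hchain', ?_⟩
    rw [Set.encard_insert_of_notMem hKc, hccard]
    push_cast
    ring
  have hwd' : sSup (chainLens (Hset G x₀ w)) = n := hwd
  have := le_of_mem_chainLens hwd' hn hmem
  omega

end Aux

/-- In a median graph, fix `x₀, x` and an integer `n ≥ 1` with
`d_nor(x₀,x) ≥ n`. Then `[x₀,x] ∩ S_nor(x₀,n) = ⋃_{h ∈ H_n} F_h`, and for every
`h ∈ H_n`, any halfspace `k` separating two points of `F_h` crosses `h`. -/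
theorem normal_sphere_decomposition {V : Type*} (G : SimpleGraph V)
    (hG : IsMedianGraph G) (x₀ x : V) (n : ℕ) (hn : 1 ≤ n) (hd : n ≤ dnor G x₀ x) :
    (itv G x₀ x ∩ {w : V | dnor G x₀ w = n} = ⋃ h ∈ Hn G x₀ x n, Fh G x₀ x n h) ∧
    (∀ h ∈ Hn G x₀ x n, ∀ k : Set V, IsHalfspace G k →
      (Fh G x₀ x n h ∩ k).Nonempty → (Fh G x₀ x n h \ k).Nonempty → Crosses k h) := by
  constructor
  · ext w
    simp only [Set.mem_inter_iff, Set.mem_setOf_eq, Set.mem_iUnion]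
    constructor
    · rintro ⟨hwitv, hwd⟩
      have hwd' : sSup (chainLens (Hset G x₀ w)) = n := hwd
      obtain ⟨c, hcA, hcch, hccard⟩ := exists_chain_of_sSup hwd' hn
      have hcfin : c.Finite := Set.finite_of_encard_eq_coe hccard
      have hcne : c.Nonempty := by
        rw [← Set.encard_ne_zero, hccard]
        exact_mod_cast Nat.one_le_iff_ne_zero.mp hn
      obtain ⟨h, hhc, hmax⟩ := chain_exists_max hcfin hcne hcch
      have hwh : w ∉ h := (hcA hhc).2.2
      refine ⟨h, ⟨Hset_mono (hcA hhc) hwitv, ?_⟩, hwitv, hwd, hwh⟩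
      refine sSup_chainLens_eq ⟨c, fun k hk => ⟨Hset_mono (hcA hk) hwitv, hmax k hk⟩,
        hcch, hccard⟩ (fun m ⟨c', hc'A, hc'ch, hc'card⟩ => ?_)
      exact le_of_mem_chainLens hwd' hn
        ⟨c', fun k hk => ⟨(hc'A hk).1.1, (hc'A hk).1.2.1,
          fun hw' => hwh ((hc'A hk).2 hw')⟩, hc'ch, hc'card⟩
    · rintro ⟨h, hhHn, hwitv, hwd, _⟩
      exact ⟨hwitv, hwd⟩
  · rintro h hHn k hk ⟨w₁, hw₁F, hw₁k⟩ ⟨w₂, hw₂F, hw₂k⟩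
    have hw₁h : w₁ ∉ h := hw₁F.2.2
    have hw₂h : w₂ ∉ h := hw₂F.2.2
    have hkcH : IsHalfspace G kᶜ :=
      ⟨hk.2.1, by rw [compl_compl]; exact hk.1, hk.2.2.2,
        by rw [compl_compl]; exact hk.2.2.1⟩
    refine ⟨?_, ⟨w₁, hw₁k, hw₁h⟩, ?_, ⟨w₂, hw₂k, hw₂h⟩⟩
    · -- (k ∩ h).Nonempty
      by_contra hempty
      have hsub : h ⊆ kᶜ := fun a ha hak =>
        hempty ⟨a, Set.mem_inter hak ha⟩
      have hne : h ≠ kᶜ := fun heq => hw₂h (heq ▸ hw₂k)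
      exact no_strict_above hn hHn hw₁F hkcH hsub hne (not_not_intro hw₁k)
    · -- (kᶜ ∩ h).Nonempty
      by_contra hempty
      have hsub : h ⊆ k := fun a ha => by
        by_contra hak
        exact hempty ⟨a, Set.mem_inter hak ha⟩
      have hne : h ≠ k := fun heq => hw₁h (heq ▸ hw₁k)
      exact no_strict_above hn hHn hw₂F hk hsub hne hw₂k
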